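/- If u(z) is a monic palindromic polynomial over ℤ of even degree 2m with |u(1)| = |u(-1)| = 1 (unramified), then u(1)·u(-1) = (-1)^m. -/
import Mathlib

open Polynomial Finset

/-- If u(z) is a monic palindromic polynomial over ℤ of even degree 2m with
|u(1)| = |u(-1)| = 1 (unramified), then u(1)·u(-1) = (-1)^m. -/
theorem stmt0 (m : ℕ) (u : Polynomial ℤ) (hmonic : u.Monic)
    (hdeg : u.natDegree = 2 * m)
    (hpal : ∀ i ≤ 2 * m, u.coeff i = u.coeff (2 * m - i))
    (h1 : |u.eval 1| = 1) (h2 : |u.eval (-1)| = 1) :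
    u.eval 1 * u.eval (-1) = (-1) ^ m := by
  set g : ℕ → ℤ := fun i => u.coeff i * (1 - (-1 : ℤ) ^ (m + i)) with hg
  have hgdvd : ∀ i, (2 : ℤ) ∣ g i := by
    intro i
    rcases Nat.even_or_odd (m + i) with h | h
    · simp [hg, h.neg_one_pow]
    · have hpow : ((-1 : ℤ)) ^ (m + i) = -1 := h.neg_one_pow
      rw [hg]
      exact ⟨u.coeff i, by simp only [hpow]; ring⟩
  have hgsym : ∀ i < m, g (2 * m - i) = g i := by
    intro i hi
    have hc : u.coeff (2 * m - i) = u.coeff i := (hpal i (by omega)).symm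
    have hpow : ((-1 : ℤ)) ^ (m + (2 * m - i)) = (-1 : ℤ) ^ (m + i) := by
      have h3 : m + (2 * m - i) = (m + i) + 2 * (m - i) := by omega
      rw [h3, pow_add, pow_mul]; simp
    simp only [hg, hc, hpow]
  have he1 : u.eval 1 = ∑ i ∈ range (2 * m + 1), u.coeff i := by
    rw [eval_eq_sum_range, hdeg]
    simp
  have he2 : u.eval (-1) = ∑ i ∈ range (2 * m + 1), u.coeff i * (-1) ^ i := by
    rw [eval_eq_sum_range, hdeg]
  have hS : u.eval 1 - (-1) ^ m * u.eval (-1) = ∑ i ∈ range (2 * m + 1), g i := by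
    rw [he1, he2, Finset.mul_sum, ← Finset.sum_sub_distrib]
    refine Finset.sum_congr rfl fun i _ => ?_
    simp only [hg, pow_add]; ring
  have hsplit : ∑ i ∈ range (2 * m + 1), g i
      = (∑ i ∈ range (m + 1), g i) + ∑ i ∈ range m, g (m + 1 + i) := by
    have h3 : 2 * m + 1 = (m + 1) + m := by omega
    rw [h3, Finset.sum_range_add]
  have hrefl : ∑ i ∈ range m, g (m + 1 + i) = ∑ i ∈ range m, g i := by
    rw [← Finset.sum_range_reflect (fun j => g (m + 1 + j)) m]
    refine Finset.sum_congr rfl fun j hj => ?_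
    have hj' : j < m := Finset.mem_range.mp hj
    have h4 : m + 1 + (m - 1 - j) = 2 * m - j := by omega
    rw [h4, hgsym j hj']
  have hgm : g m = 0 := by
    have : m + m = 2 * m := by omega
    simp [hg, this, pow_mul]
  have key : (4 : ℤ) ∣ u.eval 1 - (-1) ^ m * u.eval (-1) := by
    rw [hS, hsplit, hrefl, Finset.sum_range_succ, hgm]
    have hsum : (2 : ℤ) ∣ ∑ i ∈ range m, g i :=
      Finset.dvd_sum fun i _ => hgdvd i
    obtain ⟨t, ht⟩ := hsum
    exact ⟨t, by rw [ht]; ring⟩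
  have ha : u.eval 1 = 1 ∨ u.eval 1 = -1 := abs_eq (by norm_num) |>.mp h1
  have hb : u.eval (-1) = 1 ∨ u.eval (-1) = -1 := abs_eq (by norm_num) |>.mp h2
  rcases Nat.even_or_odd m with hm | hm
  · have hp : ((-1 : ℤ)) ^ m = 1 := hm.neg_one_pow
    rw [hp] at key ⊢
    rcases ha with ha | ha <;> rcases hb with hb | hb <;> rw [ha, hb] at key ⊢ <;> omega
  · have hp : ((-1 : ℤ)) ^ m = -1 := hm.neg_one_pow
    rw [hp] at key ⊢
    rcases ha with ha | ha <;> rcases hb with hb | hb <;> rw [ha, hb] at key ⊢ <;> omega
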